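/- arXiv:2402.03029 — 7 statements merged into one kernel-verified Lean document; each statement's English description precedes it below -/
import Mathlib

section
/- Let A be an m×n complex matrix, E an n×n matrix, F an m×m matrix. The conditions 'E·A⁽¹⁾·A = E and A·A⁽¹⁾·F = F for some inner inverse A⁽¹⁾' are equivalent to 'null(A) ⊆ null(E) and range(F) ⊆ range(A)'. (Precisely: given E² = E, F² = F, AE = FA, the EF-inverse of A exists if and only if ker(A) ⊆ ker(E) and col(F) ⊆ col(A).) -/
open Matrix LinearMap

/-- Injectivity of `mulVecLin`. -/
lemma mulVecLin_inj' {a b : ℕ} {M N : Matrix (Fin a) (Fin b) ℂ}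
    (h : M.mulVecLin = N.mulVecLin) : M = N := by
  have : Matrix.toLin' M = Matrix.toLin' N := by
    rw [Matrix.toLin'_apply', Matrix.toLin'_apply', h]
  exact Matrix.toLin'.injective this

/-- Every matrix over ℂ has an inner inverse. -/
lemma exists_inner_inverse {a b : ℕ} (A : Matrix (Fin a) (Fin b) ℂ) :
    ∃ G : Matrix (Fin b) (Fin a) ℂ, A * G * A = A := by
  set f := A.mulVecLin with hf
  obtain ⟨r, hr⟩ := (LinearMap.range f).subtype.exists_leftInverse_of_injective
    (Submodule.ker_subtype _)
  obtain ⟨s, hs⟩ := f.rangeRestrict.exists_rightInverse_of_surjective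
    (LinearMap.range_rangeRestrict f)
  refine ⟨LinearMap.toMatrix' (s ∘ₗ r), ?_⟩
  apply mulVecLin_inj'
  rw [Matrix.mulVecLin_mul, Matrix.mulVecLin_mul]
  have hG : (LinearMap.toMatrix' (s ∘ₗ r)).mulVecLin = s ∘ₗ r := by
    rw [← Matrix.toLin'_apply', Matrix.toLin'_toMatrix']
  rw [hG, ← hf]
  refine LinearMap.ext fun v => ?_
  have h1 : f v = (LinearMap.range f).subtype (f.rangeRestrict v) := rfl
  have h2 : ∀ w, f (s w) = (LinearMap.range f).subtype w := by
    intro w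
    have hw := congrFun (congrArg DFunLike.coe hs) w
    simp only [LinearMap.comp_apply, LinearMap.id_apply] at hw
    calc f (s w) = (LinearMap.range f).subtype (f.rangeRestrict (s w)) := rfl
      _ = (LinearMap.range f).subtype w := by rw [hw]
  have h3 := congrFun (congrArg DFunLike.coe hr) (f.rangeRestrict v)
  simp only [LinearMap.comp_apply, LinearMap.id_apply] at h3
  simp only [LinearMap.comp_apply]
  rw [h1, h3, h2]

theorem ef_inverse_exists_iff {m n : ℕ} (A : Matrix (Fin m) (Fin n) ℂ)
    (E : Matrix (Fin n) (Fin n) ℂ) (F : Matrix (Fin m) (Fin m) ℂ)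
    (hE2 : E * E = E) (hF2 : F * F = F) (hEF : A * E = F * A) :
    (∃ X : Matrix (Fin n) (Fin m) ℂ, X * A * X = X ∧ X * A = E ∧ A * X = F) ↔
    (LinearMap.ker A.mulVecLin ≤ LinearMap.ker E.mulVecLin ∧
     LinearMap.range F.mulVecLin ≤ LinearMap.range A.mulVecLin) := by
  constructor
  · rintro ⟨X, hXAX, hXA, hAX⟩
    constructor
    · intro v hv
      simp only [LinearMap.mem_ker] at hv ⊢
      rw [← hXA, Matrix.mulVecLin_mul, LinearMap.comp_apply, hv, map_zero]
    · rintro w ⟨v, rfl⟩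
      rw [← hAX, Matrix.mulVecLin_mul]
      exact ⟨X.mulVecLin v, rfl⟩
  · rintro ⟨hker, hrange⟩
    obtain ⟨G, hG⟩ := exists_inner_inverse A
    have hEGA : E * G * A = E := by
      apply mulVecLin_inj'
      simp only [Matrix.mulVecLin_mul]
      refine LinearMap.ext fun v => ?_
      simp only [LinearMap.comp_apply]
      have h0 : A.mulVecLin (G.mulVecLin (A.mulVecLin v) - v) = 0 := by
        rw [map_sub, ← LinearMap.comp_apply, ← Matrix.mulVecLin_mul,
          ← LinearMap.comp_apply (A * G).mulVecLin, ← Matrix.mulVecLin_mul, hG, sub_self]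
      have h1 := hker h0
      rw [LinearMap.mem_ker, map_sub, sub_eq_zero] at h1
      exact h1
    have hAGF : A * G * F = F := by
      apply mulVecLin_inj'
      simp only [Matrix.mulVecLin_mul]
      refine LinearMap.ext fun v => ?_
      simp only [LinearMap.comp_apply]
      obtain ⟨w, hw⟩ := hrange ⟨v, rfl⟩
      rw [← hw, ← LinearMap.comp_apply, ← Matrix.mulVecLin_mul, ← LinearMap.comp_apply,
        ← Matrix.mulVecLin_mul, hG]
    have hXA : E * G * F * A = E := by
      calc E * G * F * A = E * G * (F * A) := by simp only [Matrix.mul_assoc]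
        _ = E * G * (A * E) := by rw [hEF]
        _ = E * G * A * E := by simp only [Matrix.mul_assoc]
        _ = E * E := by rw [hEGA]
        _ = E := hE2
    have hAX : A * (E * G * F) = F := by
      calc A * (E * G * F) = A * E * G * F := by simp only [Matrix.mul_assoc]
        _ = F * A * G * F := by rw [hEF]
        _ = F * (A * G * F) := by simp only [Matrix.mul_assoc]
        _ = F * F := by rw [hAGF]
        _ = F := hF2
    refine ⟨E * G * F, ?_, hXA, hAX⟩
    calc E * G * F * A * (E * G * F) = E * (E * G * F) := by rw [hXA]
      _ = E * E * G * F := by simp only [Matrix.mul_assoc]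
      _ = E * G * F := by rw [hE2]
end

section
/- Let X be the (B,C)-inverse of A (XAB = B, CAX = C, range(X) ⊆ range(B), range(X*) ⊆ range(C*)). Then X is the EF-inverse of A with E = XA and F = AX; in particular E and F are idempotent, AE = FA, and X = E·A⁽¹⁾·F for any inner inverse A⁽¹⁾ of A. -/
open Matrix

theorem bc_inverse_is_ef_inverse {n : ℕ} (A B C X : Matrix (Fin n) (Fin n) ℂ)
    (h1 : X * A * B = B) (h2 : C * A * X = C)
    (h3 : LinearMap.range X.mulVecLin ≤ LinearMap.range B.mulVecLin)
    (h4 : LinearMap.range (Xᴴ).mulVecLin ≤ LinearMap.range (Cᴴ).mulVecLin) :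
    X * A * X = X ∧
    (X * A) * (X * A) = X * A ∧ (A * X) * (A * X) = A * X ∧
    A * (X * A) = (A * X) * A ∧
    ∀ A₁ : Matrix (Fin n) (Fin n) ℂ, A * A₁ * A = A →
      X = (X * A) * A₁ * (A * X) := by
  -- From h3, every column of X is in the range of B, so X = B * Y for some Y.
  have hy : ∀ j : Fin n, ∃ y : Fin n → ℂ, B.mulVec y = X.mulVec (Pi.single j 1) := by
    intro j
    have := h3 ⟨Pi.single j 1, rfl⟩
    obtain ⟨y, hy⟩ := this
    exact ⟨y, hy⟩
  choose y hy using hy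
  have hXBY : X = B * Matrix.of (fun i j => y j i) := by
    ext i j
    have := congrFun (hy j) i
    simp only [Matrix.mulVec, dotProduct] at this
    rw [Matrix.mul_apply]
    simp only [Matrix.of_apply]
    rw [this]
    simp [Pi.single_apply, mul_ite]
  have key : X * A * X = X := by
    calc X * A * X = X * A * (B * Matrix.of (fun i j => y j i)) := by rw [← hXBY]
      _ = (X * A * B) * Matrix.of (fun i j => y j i) := by simp only [Matrix.mul_assoc]
      _ = B * Matrix.of (fun i j => y j i) := by rw [h1]
      _ = X := hXBY.symm
  refine ⟨key, ?_, ?_, ?_, ?_⟩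
  · calc (X * A) * (X * A) = (X * A * X) * A := by noncomm_ring
      _ = X * A := by rw [key]
  · calc (A * X) * (A * X) = A * (X * A * X) := by noncomm_ring
      _ = A * X := by rw [key]
  · noncomm_ring
  · intro A₁ hA₁
    calc X = X * A * X := key.symm
      _ = X * (A * A₁ * A) * X := by rw [hA₁]
      _ = (X * A) * A₁ * (A * X) := by noncomm_ring
end

section
/- Let X be the EF-inverse of A (XAX = X, XA = E, AX = F, with the existence conditions E·A⁽¹⁾·A = E and A·A⁽¹⁾·F = F for an inner inverse A⁽¹⁾, E² = E, F² = F, AE = FA). Then the following are equivalent: (a) AXA = A; (b) A = AE; (c) A = FA. -/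
theorem ef_inverse_inner_tfae {m n : ℕ} (A : Matrix (Fin m) (Fin n) ℂ)
    (E : Matrix (Fin n) (Fin n) ℂ) (F : Matrix (Fin m) (Fin m) ℂ)
    (A₁ : Matrix (Fin n) (Fin m) ℂ) (hinner : A * A₁ * A = A)
    (hE : E * A₁ * A = E) (hF : A * A₁ * F = F) (hEF : A * E = F * A)
    (hE2 : E * E = E) (hF2 : F * F = F)
    (X : Matrix (Fin n) (Fin m) ℂ) (hX : X = E * A₁ * F)
    (h1 : X * A * X = X) (h2 : X * A = E) (h3 : A * X = F) :
    (A * X * A = A ↔ A = A * E) ∧ (A = A * E ↔ A = F * A) := by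
  constructor
  · rw [h3, ← hEF, eq_comm]
  · rw [hEF]
end

section
/- Let A = U · [[Σ, 0], [0, 0]] · V* be a block decomposition with Σ ∈ ℂ^{r×r} invertible and U ∈ ℂ^{m×m}, V ∈ ℂ^{n×n} unitary. Write E = V · [[E₁, E₂], [E₃, E₄]] · V* and F = U · [[F₁, F₂], [F₃, F₄]] · U* in conformal blocks. If E₁² = E₁, F₁² = F₁, Σ E₁ = F₁ Σ, E₃E₁ = E₃, F₁F₂ = F₂, and E₂ = 0, E₄ = 0, F₃ = 0, F₄ = 0, then X := V · [[E₁Σ⁻¹, E₁Σ⁻¹F₂], [E₃Σ⁻¹, E₃Σ⁻¹F₂]] · U* satisfies XAX = X, XA = E, and AX = F. -/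
open Matrix

theorem ef_inverse_canonical_form {r s t : ℕ}
    (U : Matrix (Fin r ⊕ Fin s) (Fin r ⊕ Fin s) ℂ)
    (V : Matrix (Fin r ⊕ Fin t) (Fin r ⊕ Fin t) ℂ)
    (hU : U * Uᴴ = 1 ∧ Uᴴ * U = 1) (hV : V * Vᴴ = 1 ∧ Vᴴ * V = 1)
    (S : Matrix (Fin r) (Fin r) ℂ) [Invertible S]
    (E₁ : Matrix (Fin r) (Fin r) ℂ) (E₃ : Matrix (Fin t) (Fin r) ℂ)
    (F₁ : Matrix (Fin r) (Fin r) ℂ) (F₂ : Matrix (Fin r) (Fin s) ℂ)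
    (hE1 : E₁ * E₁ = E₁) (hF1 : F₁ * F₁ = F₁) (hSE : S * E₁ = F₁ * S)
    (hE3 : E₃ * E₁ = E₃) (hF12 : F₁ * F₂ = F₂)
    (A : Matrix (Fin r ⊕ Fin s) (Fin r ⊕ Fin t) ℂ)
    (hA : A = U * (Matrix.fromBlocks S 0 0 0 : Matrix (Fin r ⊕ Fin s) (Fin r ⊕ Fin t) ℂ) * Vᴴ)
    (E : Matrix (Fin r ⊕ Fin t) (Fin r ⊕ Fin t) ℂ)
    (hE : E = V * Matrix.fromBlocks E₁ 0 E₃ 0 * Vᴴ)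
    (F : Matrix (Fin r ⊕ Fin s) (Fin r ⊕ Fin s) ℂ)
    (hF : F = U * Matrix.fromBlocks F₁ F₂ 0 0 * Uᴴ)
    (X : Matrix (Fin r ⊕ Fin t) (Fin r ⊕ Fin s) ℂ)
    (hX : X = V * Matrix.fromBlocks (E₁ * ⅟S) (E₁ * ⅟S * F₂)
                                    (E₃ * ⅟S) (E₃ * ⅟S * F₂) * Uᴴ) :
    X * A * X = X ∧ X * A = E ∧ A * X = F := by
  have hXA : X * A = E := by
    subst hX hA hE
    simp only [Matrix.mul_assoc]
    rw [← Matrix.mul_assoc Uᴴ U, hU.2, Matrix.one_mul,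
        ← Matrix.mul_assoc (Matrix.fromBlocks _ _ _ _), Matrix.fromBlocks_multiply]
    simp [Matrix.mul_assoc, invOf_mul_self]
  have hAX : A * X = F := by
    subst hX hA hF
    simp only [Matrix.mul_assoc]
    rw [← Matrix.mul_assoc Vᴴ V, hV.2, Matrix.one_mul,
        ← Matrix.mul_assoc (Matrix.fromBlocks _ _ _ _), Matrix.fromBlocks_multiply]
    congr 2
    have h1 : S * (E₁ * ⅟S) = F₁ := by
      rw [← Matrix.mul_assoc, hSE, Matrix.mul_assoc, mul_invOf_self, Matrix.mul_one]
    have h2 : S * (E₁ * (⅟S * F₂)) = F₂ := by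
      rw [show E₁ * (⅟S * F₂) = E₁ * ⅟S * F₂ by rw [Matrix.mul_assoc],
        ← Matrix.mul_assoc, h1, hF12]
    simp [Matrix.mul_assoc, h1, h2, -Matrix.invOf_eq_nonsing_inv]
  refine ⟨?_, hXA, hAX⟩
  rw [hXA, hE, hX]
  simp only [Matrix.mul_assoc]
  rw [← Matrix.mul_assoc Vᴴ V, hV.2, Matrix.one_mul,
      ← Matrix.mul_assoc (Matrix.fromBlocks _ _ _ _), Matrix.fromBlocks_multiply]
  congr 2
  have e11 : E₁ * (E₁ * ⅟S) = E₁ * ⅟S := by rw [← Matrix.mul_assoc, hE1]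
  have e31 : E₃ * (E₁ * ⅟S) = E₃ * ⅟S := by rw [← Matrix.mul_assoc, hE3]
  have e12 : E₁ * (E₁ * (⅟S * F₂)) = E₁ * ⅟S * F₂ := by
    rw [← Matrix.mul_assoc, hE1, Matrix.mul_assoc]
  have e32 : E₃ * (E₁ * (⅟S * F₂)) = E₃ * ⅟S * F₂ := by
    rw [← Matrix.mul_assoc, hE3, Matrix.mul_assoc]
  simp [e11, e31, e12, e32, Matrix.mul_assoc, -Matrix.invOf_eq_nonsing_inv]
end

section
/- Let A = U · [[Σ, 0], [0, 0]] · V* with Σ invertible and U, V unitary, and E, F as in the conformal block form. If the EF-inverse of A exists (i.e. XAX = X, XA = E, AX = F for some X), then necessarily E₂ = 0, E₄ = 0, F₃ = 0, F₄ = 0, E₁² = E₁, F₁² = F₁, Σ E₁ = F₁ Σ, E₃E₁ = E₃, and F₁F₂ = F₂. -/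
open Matrix

theorem ef_inverse_canonical_form_necessary {r s t : ℕ}
    (U : Matrix (Fin r ⊕ Fin s) (Fin r ⊕ Fin s) ℂ)
    (V : Matrix (Fin r ⊕ Fin t) (Fin r ⊕ Fin t) ℂ)
    (hU : U * Uᴴ = 1 ∧ Uᴴ * U = 1) (hV : V * Vᴴ = 1 ∧ Vᴴ * V = 1)
    (S : Matrix (Fin r) (Fin r) ℂ) [Invertible S]
    (E₁ : Matrix (Fin r) (Fin r) ℂ) (E₂ : Matrix (Fin r) (Fin t) ℂ)
    (E₃ : Matrix (Fin t) (Fin r) ℂ) (E₄ : Matrix (Fin t) (Fin t) ℂ)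
    (F₁ : Matrix (Fin r) (Fin r) ℂ) (F₂ : Matrix (Fin r) (Fin s) ℂ)
    (F₃ : Matrix (Fin s) (Fin r) ℂ) (F₄ : Matrix (Fin s) (Fin s) ℂ)
    (A : Matrix (Fin r ⊕ Fin s) (Fin r ⊕ Fin t) ℂ)
    (hA : A = U * (Matrix.fromBlocks S 0 0 0 : Matrix (Fin r ⊕ Fin s) (Fin r ⊕ Fin t) ℂ) * Vᴴ)
    (E : Matrix (Fin r ⊕ Fin t) (Fin r ⊕ Fin t) ℂ)
    (hE : E = V * Matrix.fromBlocks E₁ E₂ E₃ E₄ * Vᴴ)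
    (F : Matrix (Fin r ⊕ Fin s) (Fin r ⊕ Fin s) ℂ)
    (hF : F = U * Matrix.fromBlocks F₁ F₂ F₃ F₄ * Uᴴ)
    (hex : ∃ X : Matrix (Fin r ⊕ Fin t) (Fin r ⊕ Fin s) ℂ,
      X * A * X = X ∧ X * A = E ∧ A * X = F) :
    E₂ = 0 ∧ E₄ = 0 ∧ F₃ = 0 ∧ F₄ = 0 ∧
    E₁ * E₁ = E₁ ∧ F₁ * F₁ = F₁ ∧ S * E₁ = F₁ * S ∧
    E₃ * E₁ = E₃ ∧ F₁ * F₂ = F₂ := by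
  obtain ⟨X, hXAX, hXA, hAX⟩ := hex
  obtain ⟨hU1, hU2⟩ := hU
  obtain ⟨hV1, hV2⟩ := hV
  set D : Matrix (Fin r ⊕ Fin s) (Fin r ⊕ Fin t) ℂ := Matrix.fromBlocks S 0 0 0 with hD
  set Y : Matrix (Fin r ⊕ Fin t) (Fin r ⊕ Fin s) ℂ := Vᴴ * X * U with hY
  have cancelV : ∀ {n : Type} [Fintype n] (M : Matrix (Fin r ⊕ Fin t) n ℂ),
      Vᴴ * (V * M) = M := fun M => by rw [← Matrix.mul_assoc, hV2, Matrix.one_mul]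
  have cancelU : ∀ {n : Type} [Fintype n] (M : Matrix (Fin r ⊕ Fin s) n ℂ),
      Uᴴ * (U * M) = M := fun M => by rw [← Matrix.mul_assoc, hU2, Matrix.one_mul]
  have h1 : Y * D = Matrix.fromBlocks E₁ E₂ E₃ E₄ := by
    have h := congrArg (fun M => Vᴴ * M * V) hXA
    simp only [hA, hE, Matrix.mul_assoc, hV2, Matrix.mul_one, cancelV] at h
    rw [hY]
    simp only [Matrix.mul_assoc]
    exact h
  have h2 : D * Y = Matrix.fromBlocks F₁ F₂ F₃ F₄ := by
    have h := congrArg (fun M => Uᴴ * (M * U)) hAX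
    simp only [hA, hF, Matrix.mul_assoc, hU2, Matrix.mul_one, cancelU] at h
    rw [hY]
    simp only [Matrix.mul_assoc]
    exact h
  have h3 : Y * (D * Y) = Y := by
    have h := congrArg (fun M => Vᴴ * (M * U)) hXAX
    simp only [hA, Matrix.mul_assoc, hV2, Matrix.mul_one, cancelV] at h
    rw [hY]
    simp only [Matrix.mul_assoc]
    exact h
  set Y₁ := Y.toBlocks₁₁ with hY1
  set Y₂ := Y.toBlocks₁₂ with hY2
  set Y₃ := Y.toBlocks₂₁ with hY3
  set Y₄ := Y.toBlocks₂₂ with hY4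
  have hYb : Y = Matrix.fromBlocks Y₁ Y₂ Y₃ Y₄ := (Matrix.fromBlocks_toBlocks Y).symm
  rw [h2, hYb] at h3
  rw [hYb] at h1 h2
  rw [hD, Matrix.fromBlocks_multiply] at h1
  rw [hD, Matrix.fromBlocks_multiply] at h2
  simp only [Matrix.mul_zero, Matrix.zero_mul, add_zero, zero_add] at h1 h2
  have eE₁ : Y₁ * S = E₁ := by simpa using congrArg Matrix.toBlocks₁₁ h1
  have eE₂ : E₂ = 0 := by simpa using (congrArg Matrix.toBlocks₁₂ h1).symm
  have eE₃ : Y₃ * S = E₃ := by simpa using congrArg Matrix.toBlocks₂₁ h1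
  have eE₄ : E₄ = 0 := by simpa using (congrArg Matrix.toBlocks₂₂ h1).symm
  have eF₁ : S * Y₁ = F₁ := by simpa using congrArg Matrix.toBlocks₁₁ h2
  have eF₂ : S * Y₂ = F₂ := by simpa using congrArg Matrix.toBlocks₁₂ h2
  have eF₃ : F₃ = 0 := by simpa using (congrArg Matrix.toBlocks₂₁ h2).symm
  have eF₄ : F₄ = 0 := by simpa using (congrArg Matrix.toBlocks₂₂ h2).symm
  rw [eF₃, eF₄, Matrix.fromBlocks_multiply] at h3
  simp only [Matrix.mul_zero, Matrix.zero_mul, add_zero, zero_add] at h3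
  have g11 : Y₁ * F₁ = Y₁ := by simpa using congrArg Matrix.toBlocks₁₁ h3
  have g12 : Y₁ * F₂ = Y₂ := by simpa using congrArg Matrix.toBlocks₁₂ h3
  have g21 : Y₃ * F₁ = Y₃ := by simpa using congrArg Matrix.toBlocks₂₁ h3
  refine ⟨eE₂, eE₄, eF₃, eF₄, ?_, ?_, ?_, ?_, ?_⟩
  · calc E₁ * E₁ = Y₁ * (S * Y₁) * S := by rw [← eE₁]; simp only [Matrix.mul_assoc]
      _ = E₁ := by rw [eF₁, g11, eE₁]
  · calc F₁ * F₁ = S * (Y₁ * (S * Y₁)) := by rw [← eF₁]; simp only [Matrix.mul_assoc]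
      _ = F₁ := by rw [eF₁, g11, eF₁]
  · rw [← eE₁, ← eF₁]; simp only [Matrix.mul_assoc]
  · calc E₃ * E₁ = Y₃ * (S * Y₁) * S := by rw [← eE₁, ← eE₃]; simp only [Matrix.mul_assoc]
      _ = E₃ := by rw [eF₁, g21, eE₃]
  · calc F₁ * F₂ = S * (Y₁ * (S * Y₂)) := by rw [← eF₁, ← eF₂]; simp only [Matrix.mul_assoc]
      _ = F₂ := by rw [eF₂, g12, eF₂]
end

section
/- Let A ∈ ℂ^{m×n}, X₁, X₂ ∈ ℂ^{n×m} with X₁AX₁ = X₁ (outer inverse) and AX₂A = A (inner inverse). Then X := X₁AX₂ satisfies XAX = X, XA = X₁A, and AX = AX₁AX₂. In particular, X is the EF-inverse of A with E = X₁A and F = AX₁AX₂. -/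
theorem bilateral_inverse_is_ef {m n : ℕ} (A : Matrix (Fin m) (Fin n) ℂ)
    (X₁ X₂ : Matrix (Fin n) (Fin m) ℂ)
    (houter : X₁ * A * X₁ = X₁) (hinner : A * X₂ * A = A) :
    (X₁ * A * X₂) * A * (X₁ * A * X₂) = X₁ * A * X₂ ∧
    (X₁ * A * X₂) * A = X₁ * A ∧
    A * (X₁ * A * X₂) = A * X₁ * A * X₂ := by
  have h2 : (X₁ * A * X₂) * A = X₁ * A := by
    calc X₁ * A * X₂ * A = X₁ * (A * X₂ * A) := by
          simp only [Matrix.mul_assoc]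
    _ = X₁ * A := by rw [hinner]
  refine ⟨?_, h2, by simp only [Matrix.mul_assoc]⟩
  calc (X₁ * A * X₂) * A * (X₁ * A * X₂)
      = ((X₁ * A * X₂) * A) * X₁ * (A * X₂) := by simp only [Matrix.mul_assoc]
  _ = (X₁ * A * X₁) * (A * X₂) := by rw [h2]
  _ = X₁ * A * X₂ := by rw [houter, Matrix.mul_assoc]
end

section
/- Let A ∈ ℂ^{m×n}, X₁, X₂ ∈ ℂ^{n×m} with X₁AX₁ = X₁ and AX₂A = A. Then X := X₂AX₁ satisfies XAX = X, XA = X₂AX₁A, and AX = AX₁. In particular, X is the EF-inverse of A with E = X₂AX₁A and F = AX₁. -/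
theorem dual_bilateral_inverse_is_ef {m n : ℕ} (A : Matrix (Fin m) (Fin n) ℂ)
    (X₁ X₂ : Matrix (Fin n) (Fin m) ℂ)
    (houter : X₁ * A * X₁ = X₁) (hinner : A * X₂ * A = A) :
    (X₂ * A * X₁) * A * (X₂ * A * X₁) = X₂ * A * X₁ ∧
    (X₂ * A * X₁) * A = X₂ * A * X₁ * A ∧
    A * (X₂ * A * X₁) = A * X₁ := by
  refine ⟨?_, rfl, ?_⟩
  · calc (X₂ * A * X₁) * A * (X₂ * A * X₁)
        = X₂ * A * (X₁ * (A * X₂ * A) * X₁) := by simp only [Matrix.mul_assoc]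
      _ = X₂ * A * (X₁ * A * X₁) := by rw [hinner]
      _ = X₂ * A * X₁ := by rw [houter]
  · calc A * (X₂ * A * X₁) = (A * X₂ * A) * X₁ := by simp only [Matrix.mul_assoc]
      _ = A * X₁ := by rw [hinner]
end
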